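/- arXiv:2603.07013 — 2 statements merged into one kernel-verified Lean document; each statement's English description precedes it below -/
import Mathlib

section
/- Let δ ∈ (0,1), λ > 0, and let Ω ⊂ ℝ^N be a bounded measurable set. Define f_δ(u) = λ g_δ(u)² (1 + ∫_Ω g_δ(u(x)) dx)⁻² for u ∈ L²(Ω), where g_δ(u) = min(1/(1-u), 1/δ) pointwise extended appropriately (g_δ(u)=1/(1-u) for u ≤ 1-δ, g_δ(u)=1/δ otherwise). Then for all u₁, u₂ ∈ L²(Ω), ‖f_δ(u₁) - f_δ(u₂)‖_{L²(Ω)} ≤ (2λδ⁻³ + 2λδ⁻⁴|Ω|) ‖u₁ - u₂‖_{L²(Ω)}. -/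
open Real MeasureTheory

set_option maxHeartbeats 1000000

lemma aux_inv_sq {P Q : ℝ} (hP : 1 ≤ P) (hQ : 1 ≤ Q) :
    |(P ^ 2)⁻¹ - (Q ^ 2)⁻¹| ≤ 2 * |P - Q| := by
  have hP0 : (0:ℝ) < P := lt_of_lt_of_le one_pos hP
  have hQ0 : (0:ℝ) < Q := lt_of_lt_of_le one_pos hQ
  have key : (P ^ 2)⁻¹ - (Q ^ 2)⁻¹ = (P - Q) * (-(Q + P) * (P ^ 2 * Q ^ 2)⁻¹) := by
    field_simp
    ring
  rw [key, abs_mul]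
  have h2 : |(-(Q + P) * (P ^ 2 * Q ^ 2)⁻¹)| ≤ 2 := by
    rw [abs_mul, abs_neg, abs_of_nonneg (by positivity : (0:ℝ) ≤ Q + P),
      abs_of_nonneg (by positivity : (0:ℝ) ≤ (P ^ 2 * Q ^ 2)⁻¹), ← div_eq_mul_inv,
      div_le_iff₀ (by positivity)]
    nlinarith [mul_le_mul hP hQ zero_le_one (le_of_lt hP0), sq_nonneg (P*Q - 1)]
  calc |P - Q| * |(-(Q + P) * (P ^ 2 * Q ^ 2)⁻¹)| ≤ |P - Q| * 2 :=
        mul_le_mul_of_nonneg_left h2 (abs_nonneg _)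
    _ = 2 * |P - Q| := mul_comm _ _

theorem stmt_1 (N : ℕ) (Ω : Set (EuclideanSpace ℝ (Fin N)))
    (hΩm : MeasurableSet Ω) (hΩb : Bornology.IsBounded Ω)
    (δ lam : ℝ) (hδ : δ ∈ Set.Ioo (0:ℝ) 1) (hlam : 0 < lam)
    (g : ℝ → ℝ)
    (hg : ∀ u : ℝ, g u = if u ≤ 1 - δ then 1 / (1 - u) else 1 / δ)
    (f : (EuclideanSpace ℝ (Fin N) → ℝ) → EuclideanSpace ℝ (Fin N) → ℝ)
    (hf : ∀ u x, f u x = lam * (g (u x)) ^ 2 *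
      ((1 + ∫ y in Ω, g (u y)) ^ 2)⁻¹)
    (u₁ u₂ : EuclideanSpace ℝ (Fin N) → ℝ)
    (hu₁ : MemLp u₁ 2 (volume.restrict Ω))
    (hu₂ : MemLp u₂ 2 (volume.restrict Ω)) :
    Real.sqrt (∫ x in Ω, (f u₁ x - f u₂ x) ^ 2) ≤
      (2 * lam * (δ ^ 3)⁻¹ + 2 * lam * (δ ^ 4)⁻¹ * (volume Ω).toReal) *
        Real.sqrt (∫ x in Ω, (u₁ x - u₂ x) ^ 2) := by
  obtain ⟨hδ0, hδ1⟩ := hδ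
  haveI hfin : IsFiniteMeasure (volume.restrict Ω) :=
    ⟨by rw [Measure.restrict_apply_univ]; exact hΩb.measure_lt_top⟩
  -- g as inverse of a max
  have hgm : ∀ u : ℝ, g u = (max (1 - u) δ)⁻¹ := by
    intro u
    rw [hg]
    split_ifs with h
    · rw [max_eq_left (by linarith), one_div]
    · rw [max_eq_right (by push_neg at h; linarith), one_div]
  have hg_pos : ∀ u : ℝ, 0 < g u := by
    intro u
    rw [hgm]
    exact inv_pos.2 (lt_of_lt_of_le hδ0 (le_max_right _ _))
  have hg_le : ∀ u : ℝ, g u ≤ δ⁻¹ := by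
    intro u
    rw [hgm]
    exact inv_anti₀ hδ0 (le_max_right _ _)
  have hg_lip : ∀ a b : ℝ, |g a - g b| ≤ δ⁻¹ * δ⁻¹ * |a - b| := by
    intro a b
    rw [hgm, hgm]
    set A := max (1 - a) δ with hA
    set B := max (1 - b) δ with hB
    have hAδ : δ ≤ A := le_max_right _ _
    have hBδ : δ ≤ B := le_max_right _ _
    have hA0 : (0:ℝ) < A := lt_of_lt_of_le hδ0 hAδ
    have hB0 : (0:ℝ) < B := lt_of_lt_of_le hδ0 hBδ
    have hAB : |A - B| ≤ |a - b| := by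
      have := abs_max_sub_max_le_abs (1 - a) (1 - b) δ
      calc |A - B| ≤ |(1 - a) - (1 - b)| := this
        _ = |b - a| := by ring_nf
        _ = |a - b| := abs_sub_comm _ _
    have key : A⁻¹ - B⁻¹ = (B - A) * (A * B)⁻¹ := by field_simp
    rw [key, abs_mul, abs_of_nonneg (by positivity : (0:ℝ) ≤ (A * B)⁻¹)]
    have h1 : (A * B)⁻¹ ≤ δ⁻¹ * δ⁻¹ := by
      rw [mul_inv]
      exact mul_le_mul (inv_anti₀ hδ0 hAδ) (inv_anti₀ hδ0 hBδ)
        (by positivity) (by positivity)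
    have h2 : |B - A| ≤ |a - b| := by rw [abs_sub_comm]; exact hAB
    calc |B - A| * (A * B)⁻¹ ≤ |a - b| * (δ⁻¹ * δ⁻¹) :=
          mul_le_mul h2 h1 (by positivity) (abs_nonneg _)
      _ = δ⁻¹ * δ⁻¹ * |a - b| := mul_comm _ _
  -- measurability and integrability
  have hgmeas : Measurable g := by
    have : Measurable fun u : ℝ => (max (1 - u) δ)⁻¹ :=
      ((measurable_const.sub measurable_id).max measurable_const).inv
    rwa [show g = fun u : ℝ => (max (1 - u) δ)⁻¹ from funext hgm]
  have hgu : ∀ (u : EuclideanSpace ℝ (Fin N) → ℝ), MemLp u 2 (volume.restrict Ω) →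
      Integrable (fun y => g (u y)) (volume.restrict Ω) := by
    intro u hu
    refine Integrable.mono' (integrable_const δ⁻¹)
      (hgmeas.comp_aemeasurable hu.aestronglyMeasurable.aemeasurable).aestronglyMeasurable ?_
    filter_upwards with x
    rw [Real.norm_eq_abs, abs_of_pos (hg_pos _)]
    exact hg_le _
  have hgu₁ := hgu u₁ hu₁
  have hgu₂ := hgu u₂ hu₂
  set d : EuclideanSpace ℝ (Fin N) → ℝ := fun x => u₁ x - u₂ x with hdd
  have hd : MemLp d 2 (volume.restrict Ω) := hu₁.sub hu₂
  have hdint : Integrable d (volume.restrict Ω) := hd.integrable one_le_two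
  have hJint : Integrable (fun x => |d x|) (volume.restrict Ω) := hdint.abs
  have hSint : Integrable (fun x => d x ^ 2) (volume.restrict Ω) := hd.integrable_sq
  set J : ℝ := ∫ x in Ω, |d x| with hJdef
  set S : ℝ := ∫ x in Ω, d x ^ 2 with hSdef
  have hJ0 : 0 ≤ J := integral_nonneg fun _ => abs_nonneg _
  have hS0 : 0 ≤ S := integral_nonneg fun _ => sq_nonneg _
  set I₁ : ℝ := ∫ y in Ω, g (u₁ y) with hI₁def
  set I₂ : ℝ := ∫ y in Ω, g (u₂ y) with hI₂def
  have hI₁0 : 0 ≤ I₁ := integral_nonneg fun y => (hg_pos _).le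
  have hI₂0 : 0 ≤ I₂ := integral_nonneg fun y => (hg_pos _).le
  have hI : |I₁ - I₂| ≤ δ⁻¹ * δ⁻¹ * J := by
    have hsub : I₁ - I₂ = ∫ y in Ω, (g (u₁ y) - g (u₂ y)) := (integral_sub hgu₁ hgu₂).symm
    rw [hsub]
    calc |∫ y in Ω, (g (u₁ y) - g (u₂ y))| ≤ ∫ y in Ω, |g (u₁ y) - g (u₂ y)| := by
          simpa [Real.norm_eq_abs] using
            norm_integral_le_integral_norm (μ := volume.restrict Ω)
              (f := fun y => g (u₁ y) - g (u₂ y))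
      _ ≤ ∫ y in Ω, δ⁻¹ * δ⁻¹ * |d y| := by
          refine integral_mono_of_nonneg (Filter.Eventually.of_forall fun y => abs_nonneg _)
            (hJint.const_mul _) (Filter.Eventually.of_forall fun y => hg_lip _ _)
      _ = δ⁻¹ * δ⁻¹ * J := by rw [hJdef, ← integral_const_mul]
  -- Cauchy-Schwarz: J ≤ sqrt |Ω| * sqrt S
  have hΩr0 : 0 ≤ (volume Ω).toReal := ENNReal.toReal_nonneg
  have hCS : J ≤ Real.sqrt (volume Ω).toReal * Real.sqrt S := by
    have hpq : Real.HolderConjugate 2 2 := Real.holderConjugate_iff.mpr ⟨one_lt_two, by norm_num⟩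
    have h2 : ENNReal.ofReal (2:ℝ) = 2 := by
      rw [ENNReal.ofReal_ofNat]
    have habs : MemLp (fun x => |d x|) (ENNReal.ofReal (2:ℝ)) (volume.restrict Ω) := by
      rw [h2]; exact hd.abs
    have hone : MemLp (fun _ : EuclideanSpace ℝ (Fin N) => (1:ℝ)) (ENNReal.ofReal (2:ℝ))
        (volume.restrict Ω) := by rw [h2]; exact memLp_const 1
    have := integral_mul_le_Lp_mul_Lq_of_nonneg hpq
      (Filter.Eventually.of_forall fun x => abs_nonneg (d x))
      (Filter.Eventually.of_forall fun _ => zero_le_one) habs hone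
    simp only [mul_one, Real.one_rpow] at this
    have e1 : (∫ a in Ω, |d a| ^ (2:ℝ)) = S := by
      rw [hSdef]
      refine integral_congr_ae (Filter.Eventually.of_forall fun x => ?_)
      simp only [Real.rpow_two, sq_abs]
    have e2 : (∫ _ in Ω, (1:ℝ)) = (volume Ω).toReal := by
      rw [integral_const, smul_eq_mul, mul_one, measureReal_restrict_apply_univ, Measure.real]
    rw [e1, e2] at this
    calc J ≤ S ^ (1/2 : ℝ) * ((volume Ω).toReal) ^ (1/2 : ℝ) := this
      _ = Real.sqrt (volume Ω).toReal * Real.sqrt S := by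
          rw [← Real.sqrt_eq_rpow, ← Real.sqrt_eq_rpow, mul_comm]
  -- pointwise bound
  set A : ℝ := 2 * lam * (δ ^ 3)⁻¹ with hAdef
  set B : ℝ := 2 * lam * (δ ^ 4)⁻¹ * J with hBdef
  have hA0 : 0 ≤ A := by rw [hAdef]; positivity
  have hB0 : 0 ≤ B := by rw [hBdef]; positivity
  have hpt : ∀ x, |f u₁ x - f u₂ x| ≤ A * |d x| + B := by
    intro x
    set a : ℝ := g (u₁ x) with ha
    set b : ℝ := g (u₂ x) with hb
    set P : ℝ := 1 + I₁ with hP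
    set Q : ℝ := 1 + I₂ with hQ
    have hP1 : 1 ≤ P := by rw [hP]; linarith
    have hQ1 : 1 ≤ Q := by rw [hQ]; linarith
    have ha0 : 0 < a := hg_pos _
    have hb0 : 0 < b := hg_pos _
    have haδ : a ≤ δ⁻¹ := hg_le _
    have hbδ : b ≤ δ⁻¹ := hg_le _
    have hab : |a - b| ≤ δ⁻¹ * δ⁻¹ * |d x| := hg_lip _ _
    have hPQ : |P - Q| ≤ δ⁻¹ * δ⁻¹ * J := by
      have : P - Q = I₁ - I₂ := by rw [hP, hQ]; ring
      rw [this]; exact hI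
    have hsplit : f u₁ x - f u₂ x =
        lam * (P ^ 2)⁻¹ * (a ^ 2 - b ^ 2) + lam * b ^ 2 * ((P ^ 2)⁻¹ - (Q ^ 2)⁻¹) := by
      rw [hf, hf]; ring
    have hPinv : (P ^ 2)⁻¹ ≤ 1 := inv_le_one_of_one_le₀ (by nlinarith : (1:ℝ) ≤ P ^ 2)
    have t1 : |lam * (P ^ 2)⁻¹ * (a ^ 2 - b ^ 2)| ≤ A * |d x| := by
      rw [abs_mul, abs_mul, abs_of_nonneg hlam.le,
        abs_of_nonneg (by positivity : (0:ℝ) ≤ (P ^ 2)⁻¹)]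
      have habs2 : |a ^ 2 - b ^ 2| ≤ (2 * δ⁻¹) * (δ⁻¹ * δ⁻¹ * |d x|) := by
        have h : a ^ 2 - b ^ 2 = (a + b) * (a - b) := by ring
        rw [h, abs_mul, abs_of_pos (by linarith : (0:ℝ) < a + b)]
        exact mul_le_mul (by linarith) hab (abs_nonneg _) (by positivity)
      calc lam * (P ^ 2)⁻¹ * |a ^ 2 - b ^ 2|
          ≤ lam * 1 * ((2 * δ⁻¹) * (δ⁻¹ * δ⁻¹ * |d x|)) :=
            mul_le_mul (mul_le_mul le_rfl hPinv (by positivity) hlam.le) habs2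
              (abs_nonneg _) (by positivity)
        _ = A * |d x| := by
            rw [hAdef, show ((δ:ℝ) ^ 3)⁻¹ = (δ⁻¹) ^ 3 from (inv_pow δ 3).symm]; ring
    have t2 : |lam * b ^ 2 * ((P ^ 2)⁻¹ - (Q ^ 2)⁻¹)| ≤ B := by
      rw [abs_mul, abs_mul, abs_of_nonneg hlam.le, abs_of_nonneg (sq_nonneg b)]
      have hdiff : |(P ^ 2)⁻¹ - (Q ^ 2)⁻¹| ≤ 2 * (δ⁻¹ * δ⁻¹ * J) := by
        calc |(P ^ 2)⁻¹ - (Q ^ 2)⁻¹| ≤ 2 * |P - Q| := aux_inv_sq hP1 hQ1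
          _ ≤ 2 * (δ⁻¹ * δ⁻¹ * J) := by linarith
      calc lam * b ^ 2 * |(P ^ 2)⁻¹ - (Q ^ 2)⁻¹|
          ≤ lam * (δ⁻¹) ^ 2 * (2 * (δ⁻¹ * δ⁻¹ * J)) :=
            mul_le_mul (mul_le_mul le_rfl (pow_le_pow_left₀ hb0.le hbδ 2) (sq_nonneg b) hlam.le)
              hdiff (abs_nonneg _) (by positivity)
        _ = B := by
            rw [hBdef, show ((δ:ℝ) ^ 4)⁻¹ = (δ⁻¹) ^ 4 from (inv_pow δ 4).symm]; ring
    calc |f u₁ x - f u₂ x|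
        ≤ |lam * (P ^ 2)⁻¹ * (a ^ 2 - b ^ 2)| + |lam * b ^ 2 * ((P ^ 2)⁻¹ - (Q ^ 2)⁻¹)| := by
          rw [hsplit]; exact abs_add_le _ _
      _ ≤ A * |d x| + B := add_le_add t1 t2
  -- assemble
  have hint1 : Integrable (fun x => A ^ 2 * d x ^ 2) (volume.restrict Ω) := hSint.const_mul _
  have hint2 : Integrable (fun x => 2 * A * B * |d x|) (volume.restrict Ω) := hJint.const_mul _
  have hint3 : Integrable (fun _ : EuclideanSpace ℝ (Fin N) => B ^ 2) (volume.restrict Ω) :=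
    integrable_const _
  have hint23 : Integrable (fun x => 2 * A * B * |d x| + B ^ 2) (volume.restrict Ω) :=
    hint2.add hint3
  have heq : (fun x : EuclideanSpace ℝ (Fin N) => (A * |d x| + B) ^ 2) =
      fun x => A ^ 2 * d x ^ 2 + (2 * A * B * |d x| + B ^ 2) := by
    funext x
    rw [add_sq, mul_pow, sq_abs]
    ring
  have hRHSint : Integrable (fun x => (A * |d x| + B) ^ 2) (volume.restrict Ω) := by
    rw [heq]
    exact hint1.add hint23
  have h1 : (∫ x in Ω, (f u₁ x - f u₂ x) ^ 2) ≤ ∫ x in Ω, (A * |d x| + B) ^ 2 := by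
    refine integral_mono_of_nonneg (Filter.Eventually.of_forall fun x => sq_nonneg _)
      hRHSint (Filter.Eventually.of_forall fun x => ?_)
    show (f u₁ x - f u₂ x) ^ 2 ≤ (A * |d x| + B) ^ 2
    calc (f u₁ x - f u₂ x) ^ 2 = |f u₁ x - f u₂ x| ^ 2 := (sq_abs _).symm
      _ ≤ (A * |d x| + B) ^ 2 := by
          have := hpt x
          nlinarith [abs_nonneg (f u₁ x - f u₂ x)]
  have h2 : (∫ x in Ω, (A * |d x| + B) ^ 2) =
      A ^ 2 * S + (2 * A * B * J + B ^ 2 * (volume Ω).toReal) := by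
    rw [integral_congr_ae (Filter.EventuallyEq.of_eq heq),
      integral_add hint1 hint23, integral_add hint2 hint3,
      integral_const_mul, integral_const_mul, integral_const, smul_eq_mul,
      measureReal_restrict_apply_univ, Measure.real, hSdef, hJdef]
    ring
  have h3 : A ^ 2 * S + (2 * A * B * J + B ^ 2 * (volume Ω).toReal) ≤
      (A * Real.sqrt S + B * Real.sqrt (volume Ω).toReal) ^ 2 := by
    have hs1 : Real.sqrt S ^ 2 = S := Real.sq_sqrt hS0
    have hs2 : Real.sqrt (volume Ω).toReal ^ 2 = (volume Ω).toReal := Real.sq_sqrt hΩr0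
    have hAB : 0 ≤ A * B := mul_nonneg hA0 hB0
    nlinarith [mul_le_mul_of_nonneg_left hCS hAB, Real.sqrt_nonneg S,
      Real.sqrt_nonneg (volume Ω).toReal]
  have h4 : Real.sqrt (∫ x in Ω, (f u₁ x - f u₂ x) ^ 2) ≤
      A * Real.sqrt S + B * Real.sqrt (volume Ω).toReal := by
    have hle : (∫ x in Ω, (f u₁ x - f u₂ x) ^ 2) ≤
        (A * Real.sqrt S + B * Real.sqrt (volume Ω).toReal) ^ 2 :=
      h1.trans ((le_of_eq h2).trans h3)
    calc Real.sqrt (∫ x in Ω, (f u₁ x - f u₂ x) ^ 2)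
        ≤ Real.sqrt ((A * Real.sqrt S + B * Real.sqrt (volume Ω).toReal) ^ 2) :=
          Real.sqrt_le_sqrt hle
      _ = A * Real.sqrt S + B * Real.sqrt (volume Ω).toReal := by
          rw [Real.sqrt_sq (by positivity)]
  have h5 : A * Real.sqrt S + B * Real.sqrt (volume Ω).toReal ≤
      (A + 2 * lam * (δ ^ 4)⁻¹ * (volume Ω).toReal) * Real.sqrt S := by
    have hs2 : Real.sqrt (volume Ω).toReal ^ 2 = (volume Ω).toReal := Real.sq_sqrt hΩr0
    have hC0 : (0:ℝ) ≤ 2 * lam * (δ ^ 4)⁻¹ := by positivity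
    have key : B * Real.sqrt (volume Ω).toReal ≤
        2 * lam * (δ ^ 4)⁻¹ * (volume Ω).toReal * Real.sqrt S := by
      rw [hBdef]
      have h' := mul_le_mul_of_nonneg_left hCS
        (mul_nonneg hC0 (Real.sqrt_nonneg (volume Ω).toReal))
      calc 2 * lam * (δ ^ 4)⁻¹ * J * Real.sqrt (volume Ω).toReal
          = 2 * lam * (δ ^ 4)⁻¹ * Real.sqrt (volume Ω).toReal * J := by ring
        _ ≤ 2 * lam * (δ ^ 4)⁻¹ * Real.sqrt (volume Ω).toReal *
            (Real.sqrt (volume Ω).toReal * Real.sqrt S) := h'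
        _ = 2 * lam * (δ ^ 4)⁻¹ * Real.sqrt (volume Ω).toReal ^ 2 * Real.sqrt S := by ring
        _ = 2 * lam * (δ ^ 4)⁻¹ * (volume Ω).toReal * Real.sqrt S := by rw [hs2]
    linarith
  calc Real.sqrt (∫ x in Ω, (f u₁ x - f u₂ x) ^ 2)
      ≤ A * Real.sqrt S + B * Real.sqrt (volume Ω).toReal := h4
    _ ≤ (A + 2 * lam * (δ ^ 4)⁻¹ * (volume Ω).toReal) * Real.sqrt S := h5
    _ = (2 * lam * (δ ^ 3)⁻¹ + 2 * lam * (δ ^ 4)⁻¹ * (volume Ω).toReal) *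
        Real.sqrt (∫ x in Ω, (u₁ x - u₂ x) ^ 2) := by rw [hAdef, hSdef]
end

section
/- Let y : [0,∞) → ℝ be a nonnegative continuous function with A₂ = 0 in the uniform Gronwall lemma: if y' ≤ A₁ y² + h with ∫₀^∞ y dt ≤ A₃ < ∞ and ∫₀^∞ h dt ≤ A₄ < ∞, then lim_{t→∞} y(t) = 0. -/
open Real MeasureTheory Filter

lemma tail_tendsto (f : ℝ → ℝ) (hf : IntegrableOn f (Set.Ici 0)) :
    Tendsto (fun T => ∫ x in Set.Ioi T, f x) atTop (nhds 0) := by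
  have hfi : IntegrableOn f (Set.Ioi 0) := hf.mono_set Set.Ioi_subset_Ici_self
  have key : Tendsto (fun T => ∫ x in (0:ℝ)..T, f x) atTop
      (nhds (∫ x in Set.Ioi 0, f x)) :=
    MeasureTheory.intervalIntegral_tendsto_integral_Ioi 0 hfi tendsto_id
  have : Tendsto (fun T => (∫ x in Set.Ioi 0, f x) - ∫ x in (0:ℝ)..T, f x) atTop
      (nhds ((∫ x in Set.Ioi 0, f x) - ∫ x in Set.Ioi 0, f x)) :=
    tendsto_const_nhds.sub key
  rw [sub_self] at this
  refine this.congr' ?_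
  filter_upwards [eventually_ge_atTop (0:ℝ)] with T hT
  have hsplit := MeasureTheory.setIntegral_union (μ := volume) (f := f)
    (Set.Ioc_disjoint_Ioi (le_refl T)) measurableSet_Ioi
    (hfi.mono_set Set.Ioc_subset_Ioi_self) (hfi.mono_set (Set.Ioi_subset_Ioi hT))
  rw [Set.Ioc_union_Ioi_eq_Ioi hT] at hsplit
  rw [intervalIntegral.integral_of_le hT]
  linarith

theorem stmt_4 (y h y' : ℝ → ℝ)
    (A₁ A₃ A₄ : ℝ) (hA₁ : 0 ≤ A₁) (hA₃ : 0 ≤ A₃) (hA₄ : 0 ≤ A₄)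
    (hy0 : ∀ t ≥ (0:ℝ), 0 ≤ y t)
    (hh0 : ∀ t ≥ (0:ℝ), 0 ≤ h t)
    (hyc : ContinuousOn y (Set.Ici 0))
    (hhc : ContinuousOn h (Set.Ici 0))
    (hyd : ∀ t ≥ (0:ℝ), HasDerivAt y (y' t) t)
    (hineq : ∀ t ≥ (0:ℝ), y' t ≤ A₁ * y t ^ 2 + h t)
    (hyint : IntegrableOn y (Set.Ici 0))
    (hyI : ∫ t in Set.Ici (0:ℝ), y t ≤ A₃)
    (hhint : IntegrableOn h (Set.Ici 0))
    (hhI : ∫ t in Set.Ici (0:ℝ), h t ≤ A₄) :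
    Tendsto y atTop (nhds 0) := by
  rw [NormedAddCommGroup.tendsto_nhds_zero]
  intro ε hε
  set C := Real.exp (A₁ * A₃) with hCdef
  have hC : 0 < C := Real.exp_pos _
  set δ := ε / (3 * C) with hδdef
  have hδ : 0 < δ := by positivity
  -- choose T with small tails
  obtain ⟨T, hT1, hTy, hTh⟩ : ∃ T : ℝ, 1 ≤ T ∧ (∫ x in Set.Ioi T, y x) < δ ∧
      (∫ x in Set.Ioi T, h x) < δ := by
    have e1 := (tail_tendsto y hyint).eventually_lt_const hδ
    have e2 := (tail_tendsto h hhint).eventually_lt_const hδ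
    obtain ⟨T, h1, h2, h3⟩ := ((eventually_ge_atTop (1:ℝ)).and (e1.and e2)).exists
    exact ⟨T, h1, h2, h3⟩
  have hT0 : (0:ℝ) < T := lt_of_lt_of_le one_pos hT1
  -- find s ∈ Ioc T (T+1) with y s < δ
  obtain ⟨s, hsmem, hys⟩ : ∃ s ∈ Set.Ioc T (T + 1), y s < δ := by
    by_contra hcon
    push_neg at hcon
    have hvol : volume (Set.Ioc T (T + 1)) ≠ ⊤ := by
      simp [Real.volume_Ioc]
    have hge := MeasureTheory.setIntegral_ge_of_const_le (μ := volume)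
      measurableSet_Ioc hvol hcon (hyint.mono_set (fun x hx => le_of_lt (lt_of_lt_of_le hT0 (le_of_lt hx.1))))
    have hle : (∫ x in Set.Ioc T (T+1), y x) ≤ ∫ x in Set.Ioi T, y x := by
      refine MeasureTheory.setIntegral_mono_set
        (hyint.mono_set (fun x hx => le_of_lt (lt_trans hT0 hx))) ?_
        (Set.Ioc_subset_Ioi_self.eventuallyLE)
      filter_upwards [ae_restrict_mem measurableSet_Ioi] with x hx
      exact hy0 x (le_of_lt (lt_trans hT0 hx))
    have : volume.real (Set.Ioc T (T+1)) • δ = δ := by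
      simp [Measure.real, Real.volume_Ioc]
    linarith [hge, hle, this ▸ hge]
  have hsT : T < s := hsmem.1
  have hs0 : (0:ℝ) < s := lt_trans hT0 hsT
  -- main estimate: for all t ≥ s, y t < ε
  have key : ∀ t ≥ s, y t ≤ 2 * δ * C := by
    intro t hts
    rw [hCdef]
    have hs0 : (0:ℝ) < s := lt_trans hT0 hsT
    have hu0 : ∀ u : ℝ, s ≤ u → (0:ℝ) ≤ u := fun u hu => le_trans hs0.le hu
    have hyCt : ∀ u, s ≤ u → ContinuousAt y u := fun u hu =>
      hyc.continuousAt (Ici_mem_nhds (lt_of_lt_of_le hs0 hu))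
    have hhCt : ∀ u, s ≤ u → ContinuousAt h u := fun u hu =>
      hhc.continuousAt (Ici_mem_nhds (lt_of_lt_of_le hs0 hu))
    have hmeasy := ContinuousOn.stronglyMeasurableAtFilter (μ := volume) isOpen_Ioi
      (hyc.mono Set.Ioi_subset_Ici_self)
    have hmeash := ContinuousOn.stronglyMeasurableAtFilter (μ := volume) isOpen_Ioi
      (hhc.mono Set.Ioi_subset_Ici_self)
    have hyii : ∀ u, s ≤ u → IntervalIntegrable y volume s u := fun u hu =>
      (hyint.mono_set (fun x hx => le_trans (le_inf hs0.le (hu0 u hu)) hx.1)).intervalIntegrable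
    have hhii : ∀ u, s ≤ u → IntervalIntegrable h volume s u := fun u hu =>
      (hhint.mono_set (fun x hx => le_trans (le_inf hs0.le (hu0 u hu)) hx.1)).intervalIntegrable
    set Y : ℝ → ℝ := fun u => ∫ x in s..u, y x with hYdef
    set H : ℝ → ℝ := fun u => ∫ x in s..u, h x with hHdef
    have hYd : ∀ u, s ≤ u → HasDerivAt Y (y u) u := fun u hu =>
      intervalIntegral.integral_hasDerivAt_right (hyii u hu)
        (hmeasy u (lt_of_lt_of_le hs0 hu)) (hyCt u hu)
    have hHd : ∀ u, s ≤ u → HasDerivAt H (h u) u := fun u hu =>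
      intervalIntegral.integral_hasDerivAt_right (hhii u hu)
        (hmeash u (lt_of_lt_of_le hs0 hu)) (hhCt u hu)
    have hY0 : ∀ u, s ≤ u → 0 ≤ Y u := fun u hu =>
      intervalIntegral.integral_nonneg hu (fun x hx => hy0 x (le_trans hs0.le hx.1))
    set E : ℝ → ℝ := fun u => Real.exp (-(A₁ * Y u)) with hEdef
    have hE1 : ∀ u, s ≤ u → E u ≤ 1 := fun u hu => by
      rw [hEdef]
      exact Real.exp_le_one_iff.mpr (neg_nonpos.mpr (mul_nonneg hA₁ (hY0 u hu)))
    have hEpos : ∀ u, 0 < E u := fun u => Real.exp_pos _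
    set w : ℝ → ℝ := fun u => H u - y u * E u with hwdef
    have hwd : ∀ u, s ≤ u →
        HasDerivAt w (h u - (y' u * E u + y u * (Real.exp (-(A₁ * Y u)) * -(A₁ * y u)))) u := by
      intro u hu
      have hEd : HasDerivAt (fun v => Real.exp (-(A₁ * Y v)))
          (Real.exp (-(A₁ * Y u)) * -(A₁ * y u)) u := (((hYd u hu).const_mul A₁).neg).exp
      exact (hHd u hu).sub ((hyd u (hu0 u hu)).mul hEd)
    have hw'nonneg : ∀ u, s ≤ u →
        0 ≤ h u - (y' u * E u + y u * (Real.exp (-(A₁ * Y u)) * -(A₁ * y u))) := by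
      intro u hu
      have h1 : y' u * E u + y u * (Real.exp (-(A₁ * Y u)) * -(A₁ * y u))
          = (y' u - A₁ * y u ^ 2) * E u := by rw [hEdef]; ring
      have h2 : y' u - A₁ * y u ^ 2 ≤ h u := by linarith [hineq u (hu0 u hu)]
      have h3 : (y' u - A₁ * y u ^ 2) * E u ≤ h u * E u :=
        mul_le_mul_of_nonneg_right h2 (hEpos u).le
      have h4 : h u * E u ≤ h u * 1 :=
        mul_le_mul_of_nonneg_left (hE1 u hu) (hh0 u (hu0 u hu))
      rw [h1]; linarith
    have hmono : MonotoneOn w (Set.Icc s t) := by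
      apply monotoneOn_of_hasDerivWithinAt_nonneg (convex_Icc s t)
        (f' := fun u => h u - (y' u * E u + y u * (Real.exp (-(A₁ * Y u)) * -(A₁ * y u))))
      · intro u hu
        exact ((hwd u hu.1).differentiableAt).continuousAt.continuousWithinAt
      · intro u hu
        rw [interior_Icc] at hu
        exact ((hwd u hu.1.le).hasDerivWithinAt)
      · intro u hu
        rw [interior_Icc] at hu
        exact hw'nonneg u hu.1.le
    have hws : w s = -(y s) := by
      simp [hwdef, hHdef, hYdef, hEdef, intervalIntegral.integral_same]
    have hwle := hmono (Set.left_mem_Icc.mpr hts) (Set.right_mem_Icc.mpr hts) hts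
    rw [hws] at hwle
    -- bound H t by δ
    have hHle : H t ≤ δ := by
      rw [hHdef]
      simp only
      rw [intervalIntegral.integral_of_le hts]
      have : (∫ x in Set.Ioc s t, h x) ≤ ∫ x in Set.Ioi T, h x := by
        refine MeasureTheory.setIntegral_mono_set
          (hhint.mono_set (fun x hx => (lt_trans hT0 hx).le)) ?_
          ((Set.Ioc_subset_Ioi_self.trans (Set.Ioi_subset_Ioi hsT.le)).eventuallyLE)
        filter_upwards [ae_restrict_mem measurableSet_Ioi] with x hx
        exact hh0 x (lt_trans hT0 hx).le
      linarith
    -- bound Y t by A₃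
    have hYle : Y t ≤ A₃ := by
      rw [hYdef]
      simp only
      rw [intervalIntegral.integral_of_le hts]
      have : (∫ x in Set.Ioc s t, y x) ≤ ∫ x in Set.Ici (0:ℝ), y x := by
        have hsub : Set.Ioc s t ⊆ Set.Ici 0 := fun x hx => (lt_of_lt_of_le hs0 hx.1.le).le
        refine MeasureTheory.setIntegral_mono_set hyint ?_ hsub.eventuallyLE
        filter_upwards [ae_restrict_mem measurableSet_Ici] with x hx
        exact hy0 x hx
      linarith
    -- combine
    have hz : y t * E t ≤ 2 * δ := by
      have : w t = H t - y t * E t := rfl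
      have hy's : 0 ≤ y s := hy0 s hs0.le
      nlinarith [hwle, hHle]
    have hEinv : y t = y t * E t * Real.exp (A₁ * Y t) := by
      rw [hEdef, mul_assoc, ← Real.exp_add]
      simp
    rw [hEinv]
    have hexp : Real.exp (A₁ * Y t) ≤ Real.exp (A₁ * A₃) :=
      Real.exp_le_exp.mpr (mul_le_mul_of_nonneg_left hYle hA₁)
    have hyE : 0 ≤ y t * E t := mul_nonneg (hy0 t (hu0 t hts)) (hEpos t).le
    calc y t * E t * Real.exp (A₁ * Y t) ≤ 2 * δ * Real.exp (A₁ * Y t) :=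
          mul_le_mul_of_nonneg_right hz (Real.exp_pos _).le
      _ ≤ 2 * δ * Real.exp (A₁ * A₃) :=
          mul_le_mul_of_nonneg_left hexp (by positivity)
  filter_upwards [eventually_ge_atTop s] with t hts
  have h1 := key t hts
  have h2 : 0 ≤ y t := hy0 t (le_trans (le_of_lt hs0) hts)
  have : 2 * δ * C = 2/3 * ε := by
    field_simp [hδdef]
    rw [hδdef]; field_simp
  rw [Real.norm_eq_abs, abs_of_nonneg h2]
  linarith
end
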